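/- Let R be a commutative ring, n a natural number, and A an (n+1)×(n+1) matrix over R. Write A in block form with upper-left scalar a = A₀₀, first-row remainder R′ (the row vector (A₀ⱼ)_{j≥1}), first-column remainder S′ (the column vector (Aᵢ₀)_{i≥1}), and lower-right n×n block M = (Aᵢⱼ)_{i,j≥1}. Then the characteristic polynomial of A satisfies charpoly(A) = (X − a)·charpoly(M) − R′ · adj(X·I − M) · S′, where adj(X·I − M) is the adjugate of the characteristic matrix of M over R[X], and R′ · adj(X·I − M) · S′ denotes the scalar obtained as the dot product of R′ (entries embedded into R[X]) with the matrix–vector product of adj(X·I − M) and S′ (entries embedded into R[X]). -/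
import Mathlib


open Matrix Polynomial

/-- General block expansion of a determinant along the first row and column. -/
theorem det_block_expansion {α : Type*} [CommRing α] (n : ℕ)
    (B : Matrix (Fin (n + 1)) (Fin (n + 1)) α) :
    B.det = B 0 0 * (B.submatrix Fin.succ Fin.succ).det -
      (fun j : Fin n => B 0 j.succ) ⬝ᵥ
        ((B.submatrix Fin.succ Fin.succ).adjugate.mulVec (fun i : Fin n => B i.succ 0)) := by
  rcases n with _ | m
  · simp [Matrix.det_fin_one, Matrix.det_fin_zero, dotProduct]
  set M := B.submatrix Fin.succ Fin.succ with hM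
  rw [Matrix.det_succ_row_zero, Fin.sum_univ_succ]
  have h0 : B.submatrix Fin.succ (Fin.succAbove 0) = M := by
    ext i j; simp [Fin.succAbove, M]
  rw [h0]
  simp only [Fin.val_zero, pow_zero, one_mul]
  rw [sub_eq_add_neg]
  congr 1
  rw [dotProduct, ← Finset.sum_neg_distrib]
  refine Finset.sum_congr rfl fun k _ => ?_
  have hexp : (B.submatrix Fin.succ (Fin.succAbove k.succ)).det =
      ∑ i : Fin (m + 1), (-1 : α) ^ (i : ℕ) * B i.succ 0 *
        (M.submatrix i.succAbove k.succAbove).det := by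
    have hsub : ∀ i : Fin (m + 1),
        (B.submatrix Fin.succ k.succ.succAbove).submatrix i.succAbove Fin.succ =
          M.submatrix i.succAbove k.succAbove := by
      intro i; ext a b; simp [M, Fin.succ_succAbove_succ]
    have hent : ∀ i : Fin (m + 1),
        (B.submatrix Fin.succ k.succ.succAbove) i 0 = B i.succ 0 := by
      intro i; simp [Fin.succAbove, Fin.succ_pos]
    rw [Matrix.det_succ_column_zero]
    exact Finset.sum_congr rfl fun i _ => by rw [hsub, hent]
  rw [hexp, Matrix.mulVec, dotProduct]
  rw [Finset.mul_sum, Finset.mul_sum, ← Finset.sum_neg_distrib]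
  refine Finset.sum_congr rfl fun i _ => ?_
  rw [Matrix.adjugate_fin_succ_eq_det_submatrix, Fin.val_succ, pow_succ]
  ring

theorem charmatrix_submatrix_succ {α : Type*} [CommRing α] (n : ℕ)
    (A : Matrix (Fin (n + 1)) (Fin (n + 1)) α) :
    A.charmatrix.submatrix Fin.succ Fin.succ = (A.submatrix Fin.succ Fin.succ).charmatrix := by
  ext i j
  by_cases h : i = j <;>
    simp [Matrix.charmatrix_apply, Matrix.one_apply, h,
      fun h' : ¬ i = j => (Fin.succ_injective n).ne h']

/-- Cofactor-style expansion of the characteristic polynomial along the first row and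
column: `charpoly A = (X - a) * charpoly M - R′ ⬝ adj(X·I - M) ⬝ S′`, where `a = A 0 0`,
`M` is the lower-right block, `R′` the rest of the first row and `S′` the rest of the
first column. -/
theorem charpoly_block_expansion (R : Type*) [CommRing R] (n : ℕ)
    (A : Matrix (Fin (n + 1)) (Fin (n + 1)) R) :
    A.charpoly =
      (Polynomial.X - Polynomial.C (A 0 0)) * (A.submatrix Fin.succ Fin.succ).charpoly -
        (fun j : Fin n => Polynomial.C (A 0 j.succ)) ⬝ᵥ
          ((A.submatrix Fin.succ Fin.succ).charmatrix.adjugate.mulVec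
            (fun i : Fin n => Polynomial.C (A i.succ 0))) := by
  rw [Matrix.charpoly, Matrix.charpoly, det_block_expansion, charmatrix_submatrix_succ]
  have h00 : A.charmatrix 0 0 = Polynomial.X - Polynomial.C (A 0 0) := by
    simp [Matrix.charmatrix_apply, Matrix.one_apply]
  have hrow : (fun j : Fin n => A.charmatrix 0 j.succ) =
      -fun j : Fin n => Polynomial.C (A 0 j.succ) := by
    funext j
    simp [Matrix.charmatrix_apply, Matrix.one_apply, (Fin.succ_ne_zero j).symm]
  have hcol : (fun i : Fin n => A.charmatrix i.succ 0) =
      -fun i : Fin n => Polynomial.C (A i.succ 0) := by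
    funext i
    simp [Matrix.charmatrix_apply, Matrix.one_apply, Fin.succ_ne_zero i]
  rw [h00, hrow, hcol, Matrix.mulVec_neg, neg_dotProduct, dotProduct_neg, neg_neg]
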